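/- arXiv:2205.00610 — 3 statements merged into one kernel-verified Lean document; each statement's English description precedes it below -/
import Mathlib

section
/- Under assumptions (A1)–(A6) and positivity, the potential-outcome mean in the target population is identified by the g-formula: E[Y_a | R = false] = Σ_x ℙ(X = x | R = false) · E[Y | X = x, A = a, R = true], where the sum is over all x with ℙ(X = x, R = false) > 0. -/
open Finset

attribute [local instance] Classical.propDecidable

variable {Ω : Type*}

/-- Probability of an event. -/
noncomputable def pr [Fintype Ω] (P : Ω → ℝ) (E : Ω → Prop) : ℝ :=
  ∑ ω, if E ω then P ω else 0

/-- Expectation of a real random variable. -/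
noncomputable def ex [Fintype Ω] (P : Ω → ℝ) (Z : Ω → ℝ) : ℝ :=
  ∑ ω, P ω * Z ω

/-- Conditional probability ℙ(F | E) = ℙ(F ∩ E)/ℙ(E). -/
noncomputable def cpr [Fintype Ω] (P : Ω → ℝ) (F E : Ω → Prop) : ℝ :=
  pr P (fun ω => F ω ∧ E ω) / pr P E

/-- Conditional expectation E[Z | E] = E[Z·1_E]/ℙ(E). -/
noncomputable def cex [Fintype Ω] (P : Ω → ℝ) (Z : Ω → ℝ) (E : Ω → Prop) : ℝ :=
  (∑ ω, if E ω then P ω * Z ω else 0) / pr P E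


noncomputable def prn [Fintype Ω] (P : Ω → ℝ) (E : Ω → Prop) (f : Ω → ℝ) : ℝ :=
  ∑ ω, if E ω then P ω * f ω else 0

lemma cex_def [Fintype Ω] (P : Ω → ℝ) (Z : Ω → ℝ) (E : Ω → Prop) :
    cex P Z E = prn P E Z / pr P E := rfl

section helpers2
variable [Fintype Ω] (P : Ω → ℝ)

lemma prn_congr (f : Ω → ℝ) {E E' : Ω → Prop} (h : ∀ ω, E ω ↔ E' ω) :
    prn P E f = prn P E' f :=
  Finset.sum_congr rfl fun ω _ => by rw [if_congr (h ω) rfl rfl]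

lemma prn_partition {𝒳 : Type*} [Fintype 𝒳] (X : Ω → 𝒳) (E : Ω → Prop) (f : Ω → ℝ) :
    prn P E f = ∑ x, prn P (fun ω => E ω ∧ X ω = x) f := by
  unfold prn
  rw [Finset.sum_comm]
  refine Finset.sum_congr rfl fun ω _ => ?_
  by_cases hE : E ω
  · simp [hE, Finset.sum_ite_eq]
  · simp [hE]

lemma prn_eq_zero (hP0 : ∀ ω, 0 ≤ P ω) {E : Ω → Prop} (h0 : pr P E = 0) (f : Ω → ℝ) :
    prn P E f = 0 := by
  refine Finset.sum_eq_zero fun ω _ => ?_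
  by_cases hc : E ω
  · have hPω : P ω = 0 := by
      unfold pr at h0
      have hterm := (Finset.sum_eq_zero_iff_of_nonneg (fun ω' _ => by
        by_cases h' : E ω' <;> simp [h', hP0 ω'])).1 h0 ω (Finset.mem_univ ω)
      simpa [hc] using hterm
    simp [hc, hPω]
  · simp [hc]

end helpers2

section helpers
variable [Fintype Ω] (P : Ω → ℝ)

lemma pr_congr {E F : Ω → Prop} (h : ∀ ω, E ω ↔ F ω) : pr P E = pr P F :=
  Finset.sum_congr rfl fun ω _ => by rw [if_congr (h ω) rfl rfl]

lemma pr_nonneg (hP0 : ∀ ω, 0 ≤ P ω) (E : Ω → Prop) : 0 ≤ pr P E :=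
  Finset.sum_nonneg fun ω _ => by by_cases h : E ω <;> simp [h, hP0 ω]

lemma pr_mono (hP0 : ∀ ω, 0 ≤ P ω) {E F : Ω → Prop} (h : ∀ ω, E ω → F ω) :
    pr P E ≤ pr P F := by
  apply Finset.sum_le_sum; intro ω _
  by_cases hE : E ω
  · simp [hE, h ω hE]
  · simp only [hE, if_false]; split <;> simp [hP0 ω]

lemma pr_pos_mono (hP0 : ∀ ω, 0 ≤ P ω) {E F : Ω → Prop} (h : ∀ ω, E ω → F ω)
    (hE : 0 < pr P E) : 0 < pr P F := lt_of_lt_of_le hE (pr_mono P hP0 h)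

lemma cpr_congr {F F' E E' : Ω → Prop} (hF : ∀ ω, F ω ↔ F' ω) (hE : ∀ ω, E ω ↔ E' ω) :
    cpr P F E = cpr P F' E' := by
  unfold cpr
  rw [pr_congr P (fun ω => and_congr (hF ω) (hE ω)), pr_congr P hE]

lemma cex_congr (Z : Ω → ℝ) {E E' : Ω → Prop} (hE : ∀ ω, E ω ↔ E' ω) :
    cex P Z E = cex P Z E' := by
  unfold cex
  rw [pr_congr P hE]
  congr 1
  exact Finset.sum_congr rfl fun ω _ => by rw [if_congr (hE ω) rfl rfl]

lemma sum_ite_partition {𝒳 : Type*} [Fintype 𝒳] (X : Ω → 𝒳) (E : Ω → Prop) (f : Ω → ℝ) :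
    (∑ ω, if E ω then f ω else 0) = ∑ x, ∑ ω, if E ω ∧ X ω = x then f ω else 0 := by
  rw [Finset.sum_comm]
  refine Finset.sum_congr rfl fun ω _ => ?_
  by_cases hE : E ω
  · simp [hE, Finset.sum_ite_eq]
  · simp [hE]

lemma pr_partition {𝒳 : Type*} [Fintype 𝒳] (X : Ω → 𝒳) (E : Ω → Prop) :
    pr P E = ∑ x, pr P (fun ω => E ω ∧ X ω = x) := by
  unfold pr
  rw [Finset.sum_comm]
  refine Finset.sum_congr rfl fun ω _ => ?_
  by_cases hE : E ω
  · simp [hE, Finset.sum_ite_eq]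
  · simp [hE]

lemma cex_eq_sum (Z : Ω → ℝ) (E : Ω → Prop) (s : Finset ℝ) (hs : ∀ ω, Z ω ∈ s) :
    cex P Z E = ∑ y ∈ s, y * cpr P (fun ω => Z ω = y) E := by
  unfold cex cpr pr
  simp_rw [← mul_div_assoc]
  rw [← Finset.sum_div]
  congr 1
  simp_rw [Finset.mul_sum, mul_ite, mul_zero]
  rw [Finset.sum_comm]
  refine Finset.sum_congr rfl fun ω _ => ?_
  by_cases hE : E ω
  · simp only [hE, and_true, if_true]
    rw [Finset.sum_ite_eq s (Z ω) (fun y => y * P ω)]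
    simp [hs ω, mul_comm]
  · simp [hE]

lemma cpr_cond (F B E : Ω → Prop) (hE : 0 < pr P E)
    (hBE : 0 < pr P (fun ω => B ω ∧ E ω))
    (hind : cpr P (fun ω => F ω ∧ B ω) E = cpr P F E * cpr P B E) :
    cpr P F (fun ω => B ω ∧ E ω) = cpr P F E := by
  unfold cpr at hind ⊢
  rw [pr_congr P (show ∀ ω, (F ω ∧ B ω ∧ E ω) ↔ ((F ω ∧ B ω) ∧ E ω) from fun ω => and_assoc.symm)]
  rw [div_eq_div_iff hBE.ne' hE.ne']
  rw [div_eq_iff hE.ne'] at hind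
  rw [hind]
  field_simp

end helpers

/-- Under (A1)–(A6) and positivity, the potential-outcome mean in the
target population is identified by the g-formula. -/
theorem g_formula_identification
    {𝒳 𝒲 𝒯 : Type*} [Fintype Ω] [Fintype 𝒳] [Fintype 𝒲] [Fintype 𝒯]
    (P : Ω → ℝ) (hP0 : ∀ ω, 0 ≤ P ω) (hP1 : ∑ ω, P ω = 1)
    (X : Ω → 𝒳) (W : Ω → 𝒲) (A : Ω → 𝒯) (Y Ya : Ω → ℝ) (R : Ω → Bool) (a : 𝒯)
    -- (A1) consistency
    (hA1 : ∀ ω, A ω = a → Y ω = Ya ω)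
    -- (A2) within-trial exchangeability over treatment
    (hA2 : ∀ x w a' y, 0 < pr P (fun ω => X ω = x ∧ W ω = w ∧ R ω = true) →
      cpr P (fun ω => Ya ω = y ∧ A ω = a') (fun ω => X ω = x ∧ W ω = w ∧ R ω = true)
        = cpr P (fun ω => Ya ω = y) (fun ω => X ω = x ∧ W ω = w ∧ R ω = true)
          * cpr P (fun ω => A ω = a') (fun ω => X ω = x ∧ W ω = w ∧ R ω = true))
    -- (A4) transportability
    (hA4 : ∀ x w r y, 0 < pr P (fun ω => X ω = x ∧ W ω = w) →
      cpr P (fun ω => Ya ω = y ∧ R ω = r) (fun ω => X ω = x ∧ W ω = w)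
        = cpr P (fun ω => Ya ω = y) (fun ω => X ω = x ∧ W ω = w)
          * cpr P (fun ω => R ω = r) (fun ω => X ω = x ∧ W ω = w))
    -- (A6) outcome independent of the systematically missing covariates
    (hA6 : ∀ x, 0 < pr P (fun ω => X ω = x ∧ R ω = true ∧ A ω = a) →
      ∀ w y, 0 < pr P (fun ω => X ω = x ∧ W ω = w ∧ R ω = true ∧ A ω = a) →
      cpr P (fun ω => Y ω = y) (fun ω => X ω = x ∧ W ω = w ∧ R ω = true ∧ A ω = a)
        = cpr P (fun ω => Y ω = y) (fun ω => X ω = x ∧ R ω = true ∧ A ω = a))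
    -- positivity
    (hposT : 0 < pr P (fun ω => R ω = false))
    (hpos : ∀ x w, 0 < pr P (fun ω => X ω = x ∧ W ω = w ∧ R ω = false) →
      0 < pr P (fun ω => A ω = a ∧ X ω = x ∧ W ω = w ∧ R ω = true)) :
    cex P Ya (fun ω => R ω = false)
      = ∑ x ∈ Finset.univ.filter
            (fun x => 0 < pr P (fun ω => X ω = x ∧ R ω = false)),
          cpr P (fun ω => X ω = x) (fun ω => R ω = false)
            * cex P Y (fun ω => X ω = x ∧ A ω = a ∧ R ω = true) := by
  classical
  -- Key pointwise claim: for every (x, w), the (x,w)-piece of the numerator equals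
  -- pr(X=x, W=w, R=false) * E[Y | X=x, A=a, R=true].
  have key : ∀ x w, prn P (fun ω => X ω = x ∧ W ω = w ∧ R ω = false) Ya
      = pr P (fun ω => X ω = x ∧ W ω = w ∧ R ω = false)
        * cex P Y (fun ω => X ω = x ∧ A ω = a ∧ R ω = true) := by
    intro x w
    by_cases hp : 0 < pr P (fun ω => X ω = x ∧ W ω = w ∧ R ω = false)
    · have hp0 : 0 < pr P (fun ω => X ω = x ∧ W ω = w) :=
        pr_pos_mono P hP0 (fun ω h => ⟨h.1, h.2.1⟩) hp
      have hpA : 0 < pr P (fun ω => X ω = x ∧ W ω = w ∧ R ω = true ∧ A ω = a) := by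
        have h := hpos x w hp
        rwa [pr_congr P (show ∀ ω : Ω,
          (A ω = a ∧ X ω = x ∧ W ω = w ∧ R ω = true)
            ↔ (X ω = x ∧ W ω = w ∧ R ω = true ∧ A ω = a) from fun ω => by tauto)] at h
      have hpt : 0 < pr P (fun ω => X ω = x ∧ W ω = w ∧ R ω = true) :=
        pr_pos_mono P hP0 (fun ω h => ⟨h.1, h.2.1, h.2.2.1⟩) hpA
      have hpxa : 0 < pr P (fun ω => X ω = x ∧ R ω = true ∧ A ω = a) :=
        pr_pos_mono P hP0 (fun ω h => ⟨h.1, h.2.2.1, h.2.2.2⟩) hpA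
      -- conditional-distribution chain, for each value y
      have chain : ∀ y : ℝ,
          cpr P (fun ω => Ya ω = y) (fun ω => X ω = x ∧ W ω = w ∧ R ω = false)
            = cpr P (fun ω => Y ω = y) (fun ω => X ω = x ∧ R ω = true ∧ A ω = a) := by
        intro y
        -- (A4) with r = false
        have s1 : cpr P (fun ω => Ya ω = y) (fun ω => X ω = x ∧ W ω = w ∧ R ω = false)
            = cpr P (fun ω => Ya ω = y) (fun ω => X ω = x ∧ W ω = w) := by
          have hBE : 0 < pr P (fun ω => R ω = false ∧ (X ω = x ∧ W ω = w)) := by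
            rwa [pr_congr P (show ∀ ω : Ω,
              (R ω = false ∧ (X ω = x ∧ W ω = w))
                ↔ (X ω = x ∧ W ω = w ∧ R ω = false) from fun ω => by tauto)]
          calc cpr P (fun ω => Ya ω = y) (fun ω => X ω = x ∧ W ω = w ∧ R ω = false)
              = cpr P (fun ω => Ya ω = y) (fun ω => R ω = false ∧ (X ω = x ∧ W ω = w)) :=
                cpr_congr P (fun _ => Iff.rfl) (fun ω => by tauto)
            _ = cpr P (fun ω => Ya ω = y) (fun ω => X ω = x ∧ W ω = w) :=
                cpr_cond P _ _ _ hp0 hBE (hA4 x w false y hp0)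
        -- (A4) with r = true
        have s2 : cpr P (fun ω => Ya ω = y) (fun ω => X ω = x ∧ W ω = w ∧ R ω = true)
            = cpr P (fun ω => Ya ω = y) (fun ω => X ω = x ∧ W ω = w) := by
          have hBE : 0 < pr P (fun ω => R ω = true ∧ (X ω = x ∧ W ω = w)) := by
            rwa [pr_congr P (show ∀ ω : Ω,
              (R ω = true ∧ (X ω = x ∧ W ω = w))
                ↔ (X ω = x ∧ W ω = w ∧ R ω = true) from fun ω => by tauto)]
          calc cpr P (fun ω => Ya ω = y) (fun ω => X ω = x ∧ W ω = w ∧ R ω = true)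
              = cpr P (fun ω => Ya ω = y) (fun ω => R ω = true ∧ (X ω = x ∧ W ω = w)) :=
                cpr_congr P (fun _ => Iff.rfl) (fun ω => by tauto)
            _ = cpr P (fun ω => Ya ω = y) (fun ω => X ω = x ∧ W ω = w) :=
                cpr_cond P _ _ _ hp0 hBE (hA4 x w true y hp0)
        -- (A2)
        have s3 : cpr P (fun ω => Ya ω = y) (fun ω => X ω = x ∧ W ω = w ∧ R ω = true ∧ A ω = a)
            = cpr P (fun ω => Ya ω = y) (fun ω => X ω = x ∧ W ω = w ∧ R ω = true) := by
          have hBE : 0 < pr P (fun ω => A ω = a ∧ (X ω = x ∧ W ω = w ∧ R ω = true)) := by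
            rwa [pr_congr P (show ∀ ω : Ω,
              (A ω = a ∧ (X ω = x ∧ W ω = w ∧ R ω = true))
                ↔ (X ω = x ∧ W ω = w ∧ R ω = true ∧ A ω = a) from fun ω => by tauto)]
          calc cpr P (fun ω => Ya ω = y) (fun ω => X ω = x ∧ W ω = w ∧ R ω = true ∧ A ω = a)
              = cpr P (fun ω => Ya ω = y) (fun ω => A ω = a ∧ (X ω = x ∧ W ω = w ∧ R ω = true)) :=
                cpr_congr P (fun _ => Iff.rfl) (fun ω => by tauto)
            _ = cpr P (fun ω => Ya ω = y) (fun ω => X ω = x ∧ W ω = w ∧ R ω = true) :=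
                cpr_cond P _ _ _ hpt hBE (hA2 x w a y hpt)
        -- (A1)
        have s4 : cpr P (fun ω => Ya ω = y) (fun ω => X ω = x ∧ W ω = w ∧ R ω = true ∧ A ω = a)
            = cpr P (fun ω => Y ω = y) (fun ω => X ω = x ∧ W ω = w ∧ R ω = true ∧ A ω = a) := by
          unfold cpr
          congr 1
          refine pr_congr P fun ω => ?_
          constructor
          · rintro ⟨h1, h2⟩; exact ⟨(hA1 ω h2.2.2.2).trans h1, h2⟩
          · rintro ⟨h1, h2⟩; exact ⟨(hA1 ω h2.2.2.2).symm.trans h1, h2⟩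
        -- (A6)
        have s5 := hA6 x hpxa w y hpA
        exact s1.trans (s2.symm.trans (s3.symm.trans (s4.trans s5)))
      -- pass from conditional distributions to conditional expectations
      have hcex : cex P Ya (fun ω => X ω = x ∧ W ω = w ∧ R ω = false)
          = cex P Y (fun ω => X ω = x ∧ A ω = a ∧ R ω = true) := by
        have hsYa : ∀ ω, Ya ω ∈ (Finset.univ.image Ya ∪ Finset.univ.image Y) :=
          fun ω => Finset.mem_union_left _ (Finset.mem_image_of_mem Ya (Finset.mem_univ ω))
        have hsY : ∀ ω, Y ω ∈ (Finset.univ.image Ya ∪ Finset.univ.image Y) :=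
          fun ω => Finset.mem_union_right _ (Finset.mem_image_of_mem Y (Finset.mem_univ ω))
        rw [cex_eq_sum P Ya _ _ hsYa,
            cex_congr P Y (show ∀ ω : Ω,
              (X ω = x ∧ A ω = a ∧ R ω = true) ↔ (X ω = x ∧ R ω = true ∧ A ω = a)
              from fun ω => by tauto),
            cex_eq_sum P Y _ _ hsY]
        exact Finset.sum_congr rfl fun y _ => by rw [chain y]
      have h2 : prn P (fun ω => X ω = x ∧ W ω = w ∧ R ω = false) Ya
          = cex P Ya (fun ω => X ω = x ∧ W ω = w ∧ R ω = false)
            * pr P (fun ω => X ω = x ∧ W ω = w ∧ R ω = false) := by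
        rw [cex_def, div_mul_cancel₀ _ hp.ne']
      rw [h2, hcex]; ring
    · have h0 : pr P (fun ω => X ω = x ∧ W ω = w ∧ R ω = false) = 0 :=
        le_antisymm (not_lt.1 hp) (pr_nonneg P hP0 _)
      rw [h0, zero_mul]
      exact prn_eq_zero P hP0 h0 Ya
  -- numerator identity
  have hN : prn P (fun ω => R ω = false) Ya
      = ∑ x, pr P (fun ω => X ω = x ∧ R ω = false)
          * cex P Y (fun ω => X ω = x ∧ A ω = a ∧ R ω = true) := by
    rw [prn_partition P X (fun ω => R ω = false) Ya]
    refine Finset.sum_congr rfl fun x _ => ?_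
    rw [prn_partition P W (fun ω => R ω = false ∧ X ω = x) Ya]
    calc (∑ w, prn P (fun ω => (R ω = false ∧ X ω = x) ∧ W ω = w) Ya)
        = ∑ w, pr P (fun ω => (X ω = x ∧ R ω = false) ∧ W ω = w)
            * cex P Y (fun ω => X ω = x ∧ A ω = a ∧ R ω = true) := by
          refine Finset.sum_congr rfl fun w _ => ?_
          rw [prn_congr P Ya (show ∀ ω : Ω,
            ((R ω = false ∧ X ω = x) ∧ W ω = w) ↔ (X ω = x ∧ W ω = w ∧ R ω = false)
            from fun ω => by tauto), key x w,
            pr_congr P (show ∀ ω : Ω,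
              (X ω = x ∧ W ω = w ∧ R ω = false) ↔ ((X ω = x ∧ R ω = false) ∧ W ω = w)
              from fun ω => by tauto)]
      _ = pr P (fun ω => X ω = x ∧ R ω = false)
            * cex P Y (fun ω => X ω = x ∧ A ω = a ∧ R ω = true) := by
          rw [← Finset.sum_mul, ← pr_partition P W (fun ω => X ω = x ∧ R ω = false)]
  -- extend the filtered sum to the full sum
  have hfilter : (∑ x ∈ Finset.univ.filter
        (fun x => 0 < pr P (fun ω => X ω = x ∧ R ω = false)),
        cpr P (fun ω => X ω = x) (fun ω => R ω = false)
          * cex P Y (fun ω => X ω = x ∧ A ω = a ∧ R ω = true))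
      = ∑ x, cpr P (fun ω => X ω = x) (fun ω => R ω = false)
          * cex P Y (fun ω => X ω = x ∧ A ω = a ∧ R ω = true) := by
    refine Finset.sum_subset (Finset.filter_subset _ _) fun x _ hx => ?_
    have hnot : ¬ 0 < pr P (fun ω => X ω = x ∧ R ω = false) :=
      fun h => hx (Finset.mem_filter.2 ⟨Finset.mem_univ x, h⟩)
    have h0 : pr P (fun ω => X ω = x ∧ R ω = false) = 0 :=
      le_antisymm (not_lt.1 hnot) (pr_nonneg P hP0 _)
    rw [show cpr P (fun ω => X ω = x) (fun ω => R ω = false)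
      = pr P (fun ω => X ω = x ∧ R ω = false) / pr P (fun ω => R ω = false) from rfl, h0]
    simp
  rw [hfilter, cex_def, hN, Finset.sum_div]
  refine Finset.sum_congr rfl fun x _ => ?_
  rw [show cpr P (fun ω => X ω = x) (fun ω => R ω = false)
    = pr P (fun ω => X ω = x ∧ R ω = false) / pr P (fun ω => R ω = false) from rfl,
    div_mul_eq_mul_div]
end

section
/- If the data-availability indicator D is conditionally independent of (X, A, Y) given the source indicator R, then the identifying functional admits the weighting representation among sampled units: Σ_x ℙ(X = x | R = false) · E[Y | X = x, A = a, R = true] = (1/ℙ(R = false | D = true)) · E[ (ℙ(R = false | X = X(ω), D = true) · 1{R = true, A = a}(ω) / (ℙ(A = a | X = X(ω), R = true, D = true) · ℙ(R = true | X = X(ω), D = true))) · Y(ω) | D = true ]. -/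
open Finset

attribute [local instance] Classical.propDecidable

variable {Ω : Type*}

section helpers
variable [Fintype Ω] (P : Ω → ℝ)

lemma pr_zero (hP0 : ∀ ω, 0 ≤ P ω) {E : Ω → Prop} (h : pr P E = 0) {ω : Ω}
    (hE : E ω) : P ω = 0 := by
  have := (Finset.sum_eq_zero_iff_of_nonneg (fun ω _ => by
    by_cases h' : E ω <;> simp [h', hP0 ω] :
      ∀ ω ∈ Finset.univ, 0 ≤ if E ω then P ω else 0)).mp h ω (Finset.mem_univ ω)
  simpa [hE] using this

/-- Convert an indicator-type sum (with weight 1) into a probability. -/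
lemma sum_if_one {E F : Ω → Prop} (h : ∀ ω, E ω ↔ F ω) :
    (∑ ω, if E ω then P ω * 1 else 0) = pr P F := by
  refine Finset.sum_congr rfl fun ω _ => ?_
  by_cases hE : E ω
  · simp [hE, (h ω).mp hE]
  · simp [hE, show ¬F ω from fun hF => hE ((h ω).mpr hF)]

lemma sum_if_congr (f : Ω → ℝ) {E F : Ω → Prop} (h : ∀ ω, E ω ↔ F ω) :
    (∑ ω, if E ω then f ω else 0) = ∑ ω, if F ω then f ω else 0 := by
  refine Finset.sum_congr rfl fun ω _ => ?_
  by_cases hE : E ω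
  · simp [hE, (h ω).mp hE]
  · simp [hE, show ¬F ω from fun hF => hE ((h ω).mpr hF)]

end helpers

/-- Indicator of a proposition (with a fixed classical instance). -/
noncomputable def ind (c : Prop) : ℝ := if c then 1 else 0

lemma ite_ind {c : Prop} [Decidable c] (t : ℝ) :
    (if c then t else 0) = ind c * t := by
  by_cases h : c <;> simp [ind, h]

section helpers2
variable [Fintype Ω] (P : Ω → ℝ)

lemma sum_ind_congr {E F : Ω → Prop} (f : Ω → ℝ) (h : ∀ ω, E ω ↔ F ω) :
    (∑ ω, ind (E ω) * f ω) = ∑ ω, ind (F ω) * f ω := by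
  refine Finset.sum_congr rfl fun ω _ => ?_
  by_cases hE : E ω
  · simp [ind, hE, (h ω).mp hE]
  · simp [ind, hE, show ¬F ω from fun hF => hE ((h ω).mpr hF)]

lemma sum_ind_pr {E F : Ω → Prop} (h : ∀ ω, E ω ↔ F ω) :
    (∑ ω, ind (E ω) * (P ω * 1)) = pr P F := by
  refine Finset.sum_congr rfl fun ω _ => ?_
  by_cases hE : E ω
  · simp [ind, hE, (h ω).mp hE]
  · simp [ind, hE, show ¬F ω from fun hF => hE ((h ω).mpr hF)]

end helpers2

section helpers
variable [Fintype Ω] (P : Ω → ℝ)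

/-- Instance-polymorphic congruence for indicator sums. -/
lemma sum_ite_eq {E F : Ω → Prop} {i1 : ∀ ω, Decidable (E ω)}
    {i2 : ∀ ω, Decidable (F ω)} {f g : Ω → ℝ} (h : ∀ ω, E ω ↔ F ω)
    (hf : ∀ ω, f ω = g ω) :
    (∑ ω, @ite _ (E ω) (i1 ω) (f ω) 0) = ∑ ω, @ite _ (F ω) (i2 ω) (g ω) 0 := by
  refine Finset.sum_congr rfl fun ω _ => ?_
  by_cases hE : E ω
  · rw [if_pos hE, if_pos ((h ω).mp hE), hf ω]
  · rw [if_neg hE, if_neg (fun hF => hE ((h ω).mpr hF))]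

/-- Instance-polymorphic conversion of a weight-one indicator sum to a probability. -/
lemma sum_ite_pr {E F : Ω → Prop} {i1 : ∀ ω, Decidable (E ω)}
    (h : ∀ ω, E ω ↔ F ω) :
    (∑ ω, @ite _ (E ω) (i1 ω) (P ω * 1) 0) = pr P F := by
  refine Finset.sum_congr rfl fun ω _ => ?_
  by_cases hE : E ω
  · rw [if_pos hE, if_pos ((h ω).mp hE), mul_one]
  · rw [if_neg hE, if_neg (fun hF => hE ((h ω).mpr hF))]

end helpers

lemma decomp [Fintype Ω] {𝒳 𝒯 : Type*} [Fintype 𝒳] [Fintype 𝒯] (P : Ω → ℝ)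
    (X : Ω → 𝒳) (A : Ω → 𝒯) (Y : Ω → ℝ) (C : 𝒳 → 𝒯 → ℝ → Prop) (W : ℝ → ℝ)
    (G : Ω → Prop) :
    (∑ ω, if C (X ω) (A ω) (Y ω) ∧ G ω then P ω * W (Y ω) else 0)
      = ∑ p ∈ (univ ×ˢ univ ×ˢ (univ.image Y) : Finset (𝒳 × 𝒯 × ℝ)),
          (if C p.1 p.2.1 p.2.2 then W p.2.2 else 0)
            * pr P (fun ω => (X ω = p.1 ∧ A ω = p.2.1 ∧ Y ω = p.2.2) ∧ G ω) := by
  unfold pr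
  simp only [Finset.mul_sum]
  rw [Finset.sum_comm]
  refine Finset.sum_congr rfl fun ω _ => ?_
  rw [Finset.sum_eq_single_of_mem (X ω, A ω, Y ω)
      (by simp [Finset.mem_product])]
  · by_cases hC : C (X ω) (A ω) (Y ω) <;> by_cases hG : G ω <;>
      simp [hC, hG, mul_comm]
  · rintro p _ hne
    have : ¬((X ω = p.1 ∧ A ω = p.2.1 ∧ Y ω = p.2.2) ∧ G ω) := by
      rintro ⟨⟨h1, h2, h3⟩, -⟩
      exact hne (by simp [Prod.ext_iff, h1.symm, h2.symm, h3.symm])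
    simp [this]

lemma master [Fintype Ω] {𝒳 𝒯 : Type*} [Fintype 𝒳] [Fintype 𝒯]
    (P : Ω → ℝ) (hP0 : ∀ ω, 0 ≤ P ω)
    (X : Ω → 𝒳) (A : Ω → 𝒯) (Y : Ω → ℝ) (R D : Ω → Bool)
    (hsamp : ∀ r : Bool, 0 < pr P (fun ω => R ω = r) →
      ∀ x a' (y : ℝ) (d : Bool),
        cpr P (fun ω => X ω = x ∧ A ω = a' ∧ Y ω = y ∧ D ω = d) (fun ω => R ω = r)
          = cpr P (fun ω => X ω = x ∧ A ω = a' ∧ Y ω = y) (fun ω => R ω = r)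
            * cpr P (fun ω => D ω = d) (fun ω => R ω = r))
    (C : 𝒳 → 𝒯 → ℝ → Prop) (W : ℝ → ℝ) (r : Bool) :
    (∑ ω, if C (X ω) (A ω) (Y ω) ∧ R ω = r ∧ D ω = true then P ω * W (Y ω) else 0)
        * pr P (fun ω => R ω = r)
      = (∑ ω, if C (X ω) (A ω) (Y ω) ∧ R ω = r then P ω * W (Y ω) else 0)
        * pr P (fun ω => R ω = r ∧ D ω = true) := by
  rcases eq_or_lt_of_le (pr_nonneg P hP0 (fun ω => R ω = r)) with h0 | hpos
  · have z1 : (∑ ω, if C (X ω) (A ω) (Y ω) ∧ R ω = r then P ω * W (Y ω) else 0) = 0 :=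
      Finset.sum_eq_zero fun ω _ => by
        by_cases h : C (X ω) (A ω) (Y ω) ∧ R ω = r
        · simp [h, pr_zero P hP0 h0.symm h.2]
        · simp [h]
    rw [← h0, z1]; ring
  · have point : ∀ x a' (y : ℝ),
        pr P (fun ω => (X ω = x ∧ A ω = a' ∧ Y ω = y) ∧ R ω = r ∧ D ω = true)
            * pr P (fun ω => R ω = r)
          = pr P (fun ω => (X ω = x ∧ A ω = a' ∧ Y ω = y) ∧ R ω = r)
            * pr P (fun ω => R ω = r ∧ D ω = true) := by
      intro x a' y
      have h := hsamp r hpos x a' y true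
      unfold cpr at h
      rw [pr_congr P (show ∀ ω, ((X ω = x ∧ A ω = a' ∧ Y ω = y ∧ D ω = true) ∧ R ω = r)
            ↔ ((X ω = x ∧ A ω = a' ∧ Y ω = y) ∧ R ω = r ∧ D ω = true) by tauto),
          pr_congr P (show ∀ ω, (D ω = true ∧ R ω = r) ↔ (R ω = r ∧ D ω = true) by tauto)] at h
      have ht := ne_of_gt hpos
      field_simp at h
      exact mul_right_cancel₀ ht (by linear_combination (pr P fun ω => R ω = r) * h)
    have d1 := decomp P X A Y C W (fun ω => R ω = r ∧ D ω = true)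
    have d2 := decomp P X A Y C W (fun ω => R ω = r)
    beta_reduce at d1 d2
    have e1 : (∑ ω, if C (X ω) (A ω) (Y ω) ∧ R ω = r ∧ D ω = true then P ω * W (Y ω) else 0)
        = ∑ p ∈ (univ ×ˢ univ ×ˢ (univ.image Y) : Finset (𝒳 × 𝒯 × ℝ)),
            (if C p.1 p.2.1 p.2.2 then W p.2.2 else 0)
              * pr P (fun ω => (X ω = p.1 ∧ A ω = p.2.1 ∧ Y ω = p.2.2) ∧ R ω = r ∧ D ω = true) := by
      refine Eq.trans (Finset.sum_congr rfl fun ω _ => ?_) d1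
      by_cases h : C (X ω) (A ω) (Y ω) ∧ R ω = r ∧ D ω = true <;> simp [h]
    have e2 : (∑ ω, if C (X ω) (A ω) (Y ω) ∧ R ω = r then P ω * W (Y ω) else 0)
        = ∑ p ∈ (univ ×ˢ univ ×ˢ (univ.image Y) : Finset (𝒳 × 𝒯 × ℝ)),
            (if C p.1 p.2.1 p.2.2 then W p.2.2 else 0)
              * pr P (fun ω => (X ω = p.1 ∧ A ω = p.2.1 ∧ Y ω = p.2.2) ∧ R ω = r) := by
      refine Eq.trans (Finset.sum_congr rfl fun ω _ => ?_) d2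
      by_cases h : C (X ω) (A ω) (Y ω) ∧ R ω = r <;> simp [h]
    rw [e1, e2, Finset.sum_mul, Finset.sum_mul]
    refine Finset.sum_congr rfl fun p _ => ?_
    rw [mul_assoc, mul_assoc]
    exact congrArg _ (point p.1 p.2.1 p.2.2)

/-- Random sampling within each source gives the weighting representation
of the identifying functional among sampled units (D = true). -/
theorem sampling_weighting_representation
    {𝒳 𝒯 : Type*} [Fintype Ω] [Fintype 𝒳] [Fintype 𝒯]
    (P : Ω → ℝ) (hP0 : ∀ ω, 0 ≤ P ω) (hP1 : ∑ ω, P ω = 1)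
    (X : Ω → 𝒳) (A : Ω → 𝒯) (Y : Ω → ℝ) (R D : Ω → Bool) (a : 𝒯)
    -- sampling assumption: D independent of (X, A, Y) given R
    (hsamp : ∀ r : Bool, 0 < pr P (fun ω => R ω = r) →
      ∀ x a' (y : ℝ) (d : Bool),
        cpr P (fun ω => X ω = x ∧ A ω = a' ∧ Y ω = y ∧ D ω = d) (fun ω => R ω = r)
          = cpr P (fun ω => X ω = x ∧ A ω = a' ∧ Y ω = y) (fun ω => R ω = r)
            * cpr P (fun ω => D ω = d) (fun ω => R ω = r))
    -- positivity
    (hposT : 0 < pr P (fun ω => R ω = false ∧ D ω = true))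
    (hpos : ∀ x, 0 < pr P (fun ω => X ω = x) →
      0 < pr P (fun ω => A ω = a ∧ X ω = x ∧ R ω = true ∧ D ω = true)) :
    ∑ x, cpr P (fun ω => X ω = x) (fun ω => R ω = false)
          * cex P Y (fun ω => X ω = x ∧ A ω = a ∧ R ω = true)
      = (cpr P (fun ω => R ω = false) (fun ω => D ω = true))⁻¹
          * cex P (fun ω =>
              (cpr P (fun ω' => R ω' = false) (fun ω' => X ω' = X ω ∧ D ω' = true)
                  * (if R ω = true ∧ A ω = a then (1 : ℝ) else 0)
                / (cpr P (fun ω' => A ω' = a)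
                      (fun ω' => X ω' = X ω ∧ R ω' = true ∧ D ω' = true)
                    * cpr P (fun ω' => R ω' = true)
                        (fun ω' => X ω' = X ω ∧ D ω' = true)))
              * Y ω)
            (fun ω => D ω = true) := by
  simp only [cpr, cex, ite_ind]
  have hd0 : 0 < pr P (fun ω => D ω = true) :=
    lt_of_lt_of_le hposT (pr_mono P hP0 fun ω h => h.2)
  have htf : 0 < pr P (fun ω => R ω = false) :=
    lt_of_lt_of_le hposT (pr_mono P hP0 fun ω h => h.1)
  -- Step 1: regroup the RHS sum by the value of X
  have hS : (∑ ω, ind (D ω = true) *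
        (P ω *
          (((pr P fun ω' => R ω' = false ∧ X ω' = X ω ∧ D ω' = true)
                / pr P fun ω' => X ω' = X ω ∧ D ω' = true)
              * (ind (R ω = true ∧ A ω = a) * 1)
            / (((pr P fun ω' => A ω' = a ∧ X ω' = X ω ∧ R ω' = true ∧ D ω' = true)
                  / pr P fun ω' => X ω' = X ω ∧ R ω' = true ∧ D ω' = true)
                * ((pr P fun ω' => R ω' = true ∧ X ω' = X ω ∧ D ω' = true)
                    / pr P fun ω' => X ω' = X ω ∧ D ω' = true))
            * Y ω)))
      = ∑ x, (((pr P fun ω' => R ω' = false ∧ X ω' = x ∧ D ω' = true)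
                / pr P fun ω' => X ω' = x ∧ D ω' = true)
            / (((pr P fun ω' => A ω' = a ∧ X ω' = x ∧ R ω' = true ∧ D ω' = true)
                  / pr P fun ω' => X ω' = x ∧ R ω' = true ∧ D ω' = true)
                * ((pr P fun ω' => R ω' = true ∧ X ω' = x ∧ D ω' = true)
                    / pr P fun ω' => X ω' = x ∧ D ω' = true)))
          * ∑ ω, ind ((X ω = x ∧ A ω = a) ∧ R ω = true ∧ D ω = true)
              * (P ω * Y ω) := by
    rw [← Finset.sum_fiberwise univ X]
    refine Finset.sum_congr rfl fun x _ => ?_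
    rw [Finset.sum_filter, Finset.mul_sum]
    refine Finset.sum_congr rfl fun ω _ => ?_
    clear hsamp hpos hposT hd0 htf hP1 hP0
    simp only [ind]
    by_cases hx : X ω = x
    · subst hx
      split_ifs <;>
        first
          | ring1
          | (exfalso; tauto)
    · rw [if_neg hx]
      split_ifs <;>
        first
          | ring1
          | (exfalso; tauto)
  rw [hS]
  have hstep : ∀ T : ℝ,
      (pr P (fun ω => R ω = false ∧ D ω = true) / pr P (fun ω => D ω = true))⁻¹
          * (T / pr P (fun ω => D ω = true))
        = T / pr P (fun ω => R ω = false ∧ D ω = true) := fun T => by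
    rw [inv_div]
    field_simp
  rw [hstep, Finset.sum_div]
  -- Step 2: per-x identity
  refine Finset.sum_congr rfl fun x _ => ?_
  rcases eq_or_lt_of_le (pr_nonneg P hP0 (fun ω => X ω = x)) with h0 | hpx
  · -- x outside the support of X
    have hz : ∀ ω, X ω = x → P ω = 0 := fun ω h => pr_zero P hP0 h0.symm h
    have f1z : pr P (fun ω => X ω = x ∧ R ω = false) = 0 :=
      Finset.sum_eq_zero fun ω _ => by
        by_cases h : X ω = x ∧ R ω = false
        · simp [h, hz ω h.1]
        · simp [h]
    have Nz : (∑ ω, ind ((X ω = x ∧ A ω = a) ∧ R ω = true ∧ D ω = true)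
        * (P ω * Y ω)) = 0 :=
      Finset.sum_eq_zero fun ω _ => by
        by_cases h : (X ω = x ∧ A ω = a) ∧ R ω = true ∧ D ω = true
        · simp [h, hz ω h.1.1]
        · simp [ind, h]
    rw [f1z, Nz]
    simp
  · -- x in the support of X
    have hB := hpos x hpx
    have m1 := master P hP0 X A Y R D hsamp (fun x' _ _ => x' = x) (fun _ => 1) false
    have m2 := master P hP0 X A Y R D hsamp
      (fun x' a' _ => x' = x ∧ a' = a) (fun _ => 1) true
    have m3 := master P hP0 X A Y R D hsamp
      (fun x' a' _ => x' = x ∧ a' = a) (fun y => y) true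
    beta_reduce at m1 m2 m3
    simp only [ite_ind] at m1 m2 m3
    have m1' : pr P (fun ω => R ω = false ∧ X ω = x ∧ D ω = true)
          * pr P (fun ω => R ω = false)
        = pr P (fun ω => X ω = x ∧ R ω = false)
          * pr P (fun ω => R ω = false ∧ D ω = true) := by
      refine Eq.trans (congrArg (· * pr P (fun ω => R ω = false)) ?_)
        (m1.trans (congrArg (· * pr P (fun ω => R ω = false ∧ D ω = true)) ?_))
      · exact (sum_ind_pr P fun ω => by tauto).symm
      · exact sum_ind_pr P fun ω => Iff.rfl
    have m2' : pr P (fun ω => A ω = a ∧ X ω = x ∧ R ω = true ∧ D ω = true)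
          * pr P (fun ω => R ω = true)
        = pr P (fun ω => X ω = x ∧ A ω = a ∧ R ω = true)
          * pr P (fun ω => R ω = true ∧ D ω = true) := by
      refine Eq.trans (congrArg (· * pr P (fun ω => R ω = true)) ?_)
        (m2.trans (congrArg (· * pr P (fun ω => R ω = true ∧ D ω = true)) ?_))
      · exact (sum_ind_pr P fun ω => by tauto).symm
      · exact sum_ind_pr P fun ω => by tauto
    have m3' : (∑ ω, ind ((X ω = x ∧ A ω = a) ∧ R ω = true ∧ D ω = true)
            * (P ω * Y ω)) * pr P (fun ω => R ω = true)
        = (∑ ω, ind (X ω = x ∧ A ω = a ∧ R ω = true) * (P ω * Y ω))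
          * pr P (fun ω => R ω = true ∧ D ω = true) :=
      m3.trans (congrArg (· * pr P (fun ω => R ω = true ∧ D ω = true))
        (sum_ind_congr (fun ω => P ω * Y ω) fun ω => by tauto))
    -- positivity facts
    have hst : 0 < pr P (fun ω => R ω = true ∧ D ω = true) :=
      lt_of_lt_of_le hB (pr_mono P hP0 fun ω h => ⟨h.2.2.1, h.2.2.2⟩)
    have htt : 0 < pr P (fun ω => R ω = true) :=
      lt_of_lt_of_le hst (pr_mono P hP0 fun ω h => h.1)
    have hu : 0 < pr P (fun ω' => X ω' = x ∧ D ω' = true) :=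
      lt_of_lt_of_le hB (pr_mono P hP0 fun ω h => ⟨h.2.1, h.2.2.2⟩)
    have hv : 0 < pr P (fun ω' => X ω' = x ∧ R ω' = true ∧ D ω' = true) :=
      lt_of_lt_of_le hB (pr_mono P hP0 fun ω h => h.2)
    have hg : 0 < pr P (fun ω => X ω = x ∧ A ω = a ∧ R ω = true) := by
      nlinarith [mul_pos hB htt]
    have hv2 : pr P (fun ω' => R ω' = true ∧ X ω' = x ∧ D ω' = true)
        = pr P (fun ω' => X ω' = x ∧ R ω' = true ∧ D ω' = true) :=
      pr_congr P fun ω => by tauto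
    have main : pr P (fun ω => X ω = x ∧ R ω = false)
          * (∑ ω, ind (X ω = x ∧ A ω = a ∧ R ω = true) * (P ω * Y ω))
          * (pr P (fun ω => A ω = a ∧ X ω = x ∧ R ω = true ∧ D ω = true)
            * pr P (fun ω => R ω = false ∧ D ω = true))
        = pr P (fun ω => R ω = false ∧ X ω = x ∧ D ω = true)
          * (∑ ω, ind ((X ω = x ∧ A ω = a) ∧ R ω = true ∧ D ω = true)
              * (P ω * Y ω))
          * (pr P (fun ω => R ω = false)
            * pr P (fun ω => X ω = x ∧ A ω = a ∧ R ω = true)) := by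
      apply mul_right_cancel₀
        (mul_ne_zero (ne_of_gt htt) (ne_of_gt htt))
      linear_combination
        (pr P (fun ω => X ω = x ∧ R ω = false)
          * (∑ ω, ind (X ω = x ∧ A ω = a ∧ R ω = true) * (P ω * Y ω))
          * pr P (fun ω => R ω = false ∧ D ω = true)
          * pr P (fun ω => R ω = true)) * m2'
        - (pr P (fun ω => X ω = x ∧ R ω = false)
          * pr P (fun ω => R ω = false ∧ D ω = true)
          * pr P (fun ω => X ω = x ∧ A ω = a ∧ R ω = true)
          * pr P (fun ω => R ω = true)) * m3'
        - ((∑ ω, ind ((X ω = x ∧ A ω = a) ∧ R ω = true ∧ D ω = true)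
              * (P ω * Y ω))
          * pr P (fun ω => X ω = x ∧ A ω = a ∧ R ω = true)
          * pr P (fun ω => R ω = true) * pr P (fun ω => R ω = true)) * m1'
    rw [hv2]
    field_simp
    simp only [mul_assoc] at main ⊢
    linear_combination main
end

section
/- When the outcome model is correctly specified, the augmentation term of the doubly robust functional has mean zero: if g(x) := E[Y | X = x, R = true, A = a] for every x with ℙ(X = x, R = true, A = a) > 0, then for arbitrary functions p : 𝒳 → (0, 1) and e : 𝒳 → (0, 1], E[ ((1 − p(X(ω))) · 1{R = true, A = a}(ω) / (e(X(ω)) · p(X(ω)))) · (Y(ω) − g(X(ω))) ] = 0. -/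
open Finset

attribute [local instance] Classical.propDecidable

variable {Ω : Type*}

private lemma aux_mean_zero [Fintype Ω] (P : Ω → ℝ) (hP0 : ∀ ω, 0 ≤ P ω)
    (E : Ω → Prop) (Z : Ω → ℝ) (c k : ℝ)
    (hgc : 0 < pr P E → c = cex P Z E) :
    ∑ ω, (if E ω then k * (P ω * (Z ω - c)) else 0) = 0 := by
  have split : ∑ ω, (if E ω then k * (P ω * (Z ω - c)) else 0)
      = k * ((∑ ω, if E ω then P ω * Z ω else 0) - c * pr P E) := by
    unfold pr
    rw [Finset.mul_sum, ← Finset.sum_sub_distrib, Finset.mul_sum]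
    refine Finset.sum_congr rfl (fun ω _ => ?_)
    split_ifs <;> ring
  rw [split]
  have hnn : ∀ ω ∈ Finset.univ (α := Ω), (0:ℝ) ≤ if E ω then P ω else 0 := by
    intro ω _; split_ifs; exacts [hP0 ω, le_refl 0]
  rcases eq_or_lt_of_le (show (0:ℝ) ≤ pr P E from Finset.sum_nonneg hnn) with h0 | h0
  · have hz : ∀ ω, E ω → P ω = 0 := by
      intro ω hEω
      have h2 := (Finset.sum_eq_zero_iff_of_nonneg hnn).mp h0.symm ω (Finset.mem_univ ω)
      rw [if_pos hEω] at h2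
      exact h2
    have hY0 : (∑ ω, if E ω then P ω * Z ω else 0) = 0 := by
      refine Finset.sum_eq_zero (fun ω _ => ?_)
      split_ifs with h
      · rw [hz ω h]; ring
      · rfl
    rw [hY0, ← h0]
    ring
  · rw [hgc h0]
    unfold cex
    rw [div_mul_cancel₀ _ (ne_of_gt h0), sub_self, mul_zero]

/-- When the outcome model is correctly specified, the augmentation term
of the doubly robust functional has mean zero, for arbitrary p and e. -/
theorem augmentation_mean_zero
    {𝒳 𝒯 : Type*} [Fintype Ω] [Fintype 𝒳] [Fintype 𝒯]
    (P : Ω → ℝ) (hP0 : ∀ ω, 0 ≤ P ω) (hP1 : ∑ ω, P ω = 1)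
    (X : Ω → 𝒳) (A : Ω → 𝒯) (Y : Ω → ℝ) (R : Ω → Bool) (a : 𝒯)
    -- positivity, so that g is defined on the support of X
    (hpos : ∀ x, 0 < pr P (fun ω => X ω = x) →
      0 < pr P (fun ω => A ω = a ∧ X ω = x ∧ R ω = true))
    -- correctly specified outcome model
    (g : 𝒳 → ℝ)
    (hg : ∀ x, 0 < pr P (fun ω => X ω = x ∧ R ω = true ∧ A ω = a) →
      g x = cex P Y (fun ω => X ω = x ∧ R ω = true ∧ A ω = a))
    -- arbitrary participation and treatment models
    (p e : 𝒳 → ℝ) (hp : ∀ x, 0 < p x ∧ p x < 1) (he : ∀ x, 0 < e x ∧ e x ≤ 1) :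
    ex P (fun ω =>
        ((1 - p (X ω)) * (if R ω = true ∧ A ω = a then (1 : ℝ) else 0)
            / (e (X ω) * p (X ω)))
          * (Y ω - g (X ω)))
      = 0 := by
  unfold ex
  rw [← Finset.sum_fiberwise Finset.univ X]
  apply Finset.sum_eq_zero
  intro x _
  rw [Finset.sum_filter]
  have main := aux_mean_zero P hP0 (fun ω => X ω = x ∧ R ω = true ∧ A ω = a) Y
    (g x) ((1 - p x) / (e x * p x)) (hg x)
  refine Eq.trans ?_ main
  refine Finset.sum_congr rfl (fun ω _ => ?_)
  beta_reduce
  by_cases hx : X ω = x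
  · by_cases hra : R ω = true ∧ A ω = a
    · rw [if_pos hx, if_pos (show X ω = x ∧ R ω = true ∧ A ω = a from ⟨hx, hra⟩),
        if_pos hra, hx]
      ring
    · rw [if_pos hx, if_neg hra,
        if_neg (show ¬(X ω = x ∧ R ω = true ∧ A ω = a) from fun h => hra h.2)]
      ring
  · rw [if_neg hx,
      if_neg (show ¬(X ω = x ∧ R ω = true ∧ A ω = a) from fun h => hx h.1)]
end
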